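/- For each ordered partition (A_1,...,A_k) of [n], the sets R^+ = {x ∈ ℝ^n : x_i > 0 for i ∈ A_j with j odd, x_i < 0 for i ∈ A_j with j even, |x_{i_1}| > |x_{i_2}| for i_1 ∈ A_j, i_2 ∈ A_{j+1}} and R^- = -R^+ are nonempty, open, and any point x ∈ ℝ^n with all x_i ≠ 0, all x_i + x_j ≠ 0 (i ≠ j), and all |x_i| distinct lies in R^+ or R^- for exactly one ordered partition of [n]. -/

import Mathlib

/-- `L` is an ordered partition of `[n]`: a sequence of disjoint nonempty
subsets whose union is `[n]`. -/
def IsOP (n : ℕ) (L : List (Finset (Fin n))) : Prop :=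
  (∀ A ∈ L, A.Nonempty) ∧ L.Pairwise Disjoint ∧ L.foldr (· ∪ ·) ∅ = Finset.univ

/-- The region `R⁺` attached to an ordered partition `(A₁, …, A_k)`:
`xᵢ > 0` for `i` in odd-location (even 0-indexed) blocks, `xᵢ < 0` for `i` in
even-location blocks, and `|x_{i₁}| > |x_{i₂}|` for `i₁ ∈ Aⱼ`, `i₂ ∈ A_{j+1}`. -/
def Rplus (n : ℕ) (L : List (Finset (Fin n))) : Set (Fin n → ℝ) :=
  {x | ∀ j, (hj : j < L.length) →
    (∀ i ∈ L[j]'hj, if Even j then 0 < x i else x i < 0) ∧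
    ∀ (hj' : j + 1 < L.length), ∀ i₁ ∈ L[j]'hj, ∀ i₂ ∈ L[j + 1]'hj',
      |x i₂| < |x i₁|}

/-- The opposite region `R⁻ = -R⁺`. -/
def Rminus (n : ℕ) (L : List (Finset (Fin n))) : Set (Fin n → ℝ) :=
  {x | -x ∈ Rplus n L}

def Mem (n : ℕ) (x : Fin n → ℝ) (L : List (Finset (Fin n))) : Prop :=
  ∀ j, (hj : j < L.length) →
    (∀ i ∈ L[j]'hj, if Even j then 0 < x i else x i < 0) ∧
    ∀ (hj' : j + 1 < L.length), ∀ i₁ ∈ L[j]'hj, ∀ i₂ ∈ L[j + 1]'hj',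
      |x i₂| < |x i₁|

lemma mem_foldr {n : ℕ} {L : List (Finset (Fin n))} {i : Fin n} :
    i ∈ L.foldr (· ∪ ·) ∅ ↔ ∃ j, ∃ hj : j < L.length, i ∈ L[j]'hj := by
  induction L with
  | nil => simp
  | cons A L ih =>
    simp only [List.foldr_cons, Finset.mem_union, ih]
    constructor
    · rintro (h | ⟨j, hj, h⟩)
      · exact ⟨0, by simp, h⟩
      · exact ⟨j + 1, by simpa using Nat.succ_lt_succ hj, by simpa using h⟩
    · rintro ⟨j, hj, h⟩
      match j with
      | 0 => exact Or.inl h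
      | j + 1 => exact Or.inr ⟨j, by simpa using hj, by simpa using h⟩

lemma mem_neg_tail {n : ℕ} {x : Fin n → ℝ} {A : Finset (Fin n)} {L : List (Finset (Fin n))}
    (h : Mem n x (A :: L)) : Mem n (-x) L := by
  intro j hj
  obtain ⟨h1, h2⟩ := h (j + 1) (by simpa using Nat.succ_lt_succ hj)
  refine ⟨fun i hi => ?_, fun hj' i₁ h₁ i₂ h₂ => ?_⟩
  · have := h1 i (by simpa using hi)
    by_cases he : Even j
    · have : ¬ Even (j+1) := by simpa [Nat.even_add_one] using he
      simp_all [Pi.neg_apply]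
    · have : Even (j+1) := by simpa [Nat.even_add_one] using he
      simp_all [Pi.neg_apply]
  · have := h2 (by simpa using Nat.succ_lt_succ hj') i₁ (by simpa using h₁) i₂ (by simpa using h₂)
    simpa [Pi.neg_apply, abs_neg] using this

lemma mem_cons {n : ℕ} {x : Fin n → ℝ} {A : Finset (Fin n)} {L : List (Finset (Fin n))}
    (hA : ∀ i ∈ A, 0 < x i)
    (hcross : ∀ i₁ ∈ A, ∀ (hl : 0 < L.length), ∀ i₂ ∈ L[0]'hl, |x i₂| < |x i₁|)
    (hL : Mem n (-x) L) : Mem n x (A :: L) := by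
  intro j hj
  match j with
  | 0 =>
    refine ⟨fun i hi => by simpa using hA i (by simpa using hi), fun hj' i₁ h₁ i₂ h₂ => ?_⟩
    exact hcross i₁ (by simpa using h₁) (by simpa using hj') i₂ (by simpa using h₂)
  | j + 1 =>
    obtain ⟨h1, h2⟩ := hL j (by simpa using hj)
    refine ⟨fun i hi => ?_, fun hj' i₁ h₁ i₂ h₂ => ?_⟩
    · have := h1 i (by simpa using hi)
      by_cases he : Even j
      · have hne : ¬ Even (j+1) := by simpa [Nat.even_add_one] using he
        simp_all [Pi.neg_apply]
      · have : Even (j+1) := by simpa [Nat.even_add_one] using he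
        simp_all [Pi.neg_apply]
    · have := h2 (by simpa using Nat.lt_of_succ_lt_succ hj') i₁ (by simpa using h₁) i₂
        (by simpa using h₂)
      simpa [Pi.neg_apply, abs_neg] using this

lemma mem_chain {n : ℕ} {x : Fin n → ℝ} {L : List (Finset (Fin n))}
    (hne : ∀ A ∈ L, A.Nonempty) (hm : Mem n x L) :
    ∀ (d j : ℕ) (hj' : j + d + 1 < L.length), ∀ i ∈ L[j]'(by omega),
      ∀ i' ∈ L[j + d + 1]'hj', |x i'| < |x i| := by
  intro d
  induction d with
  | zero =>
    intro j hj' i hi i' hi'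
    exact (hm j (by omega)).2 hj' i hi i' hi'
  | succ d ih =>
    intro j hj' i hi i' hi'
    obtain ⟨m, hm'⟩ := hne (L[j + d + 1]'(by omega)) (List.getElem_mem _)
    have h1 := ih j (by omega) i hi m hm'
    have h2 := (hm (j + d + 1) (by omega)).2 (by omega) m hm' i' (by
      have : j + d + 1 + 1 = j + (d+1) + 1 := by omega
      simpa [this] using hi')
    linarith

lemma mem_lt_of_lt {n : ℕ} {x : Fin n → ℝ} {L : List (Finset (Fin n))}
    (hne : ∀ A ∈ L, A.Nonempty) (hm : Mem n x L) {j j' : ℕ} (hlt : j < j')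
    (hj' : j' < L.length) : ∀ i ∈ L[j]'(by omega), ∀ i' ∈ L[j']'hj', |x i'| < |x i| := by
  intro i hi i' hi'
  obtain ⟨d, rfl⟩ : ∃ d, j' = j + d + 1 := ⟨j' - j - 1, by omega⟩
  exact mem_chain hne hm _ j hj' i hi i' hi'

lemma subset_foldr {n : ℕ} {L : List (Finset (Fin n))} {A : Finset (Fin n)} (h : A ∈ L) :
    A ⊆ L.foldr (· ∪ ·) ∅ := by
  induction L with
  | nil => simp at h
  | cons B L ih =>
    simp only [List.foldr_cons]
    rcases List.mem_cons.1 h with rfl | h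
    · exact Finset.subset_union_left
    · exact (ih h).trans Finset.subset_union_right

lemma head_eq {n : ℕ} {x : Fin n → ℝ} {A : Finset (Fin n)} {L : List (Finset (Fin n))}
    (hne : ∀ B ∈ A :: L, B.Nonempty) (hm : Mem n x (A :: L)) :
    A = ((A :: L).foldr (· ∪ ·) ∅).filter
      (fun i => 0 < x i ∧ ∀ i' ∈ (A :: L).foldr (· ∪ ·) ∅, x i' < 0 → |x i'| < |x i|) := by
  set S := (A :: L).foldr (· ∪ ·) ∅ with hS
  ext i
  simp only [Finset.mem_filter]
  constructor
  · intro hi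
    have hiS : i ∈ S := subset_foldr (List.mem_cons_self) hi
    have hpos : 0 < x i := by
      have := (hm 0 (by simp)).1 i (by simpa using hi)
      simpa using this
    refine ⟨hiS, hpos, fun i' hi' hneg => ?_⟩
    obtain ⟨j', hj', hmem⟩ := mem_foldr.1 hi'
    match j', hj', hmem with
    | 0, hj', hmem =>
      have := (hm 0 (by simp)).1 i' (by simpa using hmem)
      simp at this; linarith
    | j' + 1, hj', hmem =>
      exact mem_lt_of_lt hne hm (Nat.succ_pos j') hj' i (by simpa using hi) i' hmem
  · rintro ⟨hiS, hpos, hdom⟩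
    obtain ⟨j, hj, hmem⟩ := mem_foldr.1 hiS
    match j, hj, hmem with
    | 0, hj, hmem => simpa using hmem
    | j + 1, hj, hmem =>
      exfalso
      by_cases he : Even (j + 1)
      · -- block j is odd: pick negative element there dominating i
        obtain ⟨i₀, hi₀⟩ := hne ((A :: L)[j]'(by omega)) (List.getElem_mem _)
        have hodd : ¬ Even j := by simpa [Nat.even_add_one] using he
        have hneg : x i₀ < 0 := by
          have := (hm j (by omega)).1 i₀ hi₀
          simpa [hodd] using this
        have h1 : |x i| < |x i₀| := (hm j (by omega)).2 hj i₀ hi₀ i hmem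
        have h2 : |x i₀| < |x i| :=
          hdom i₀ (mem_foldr.2 ⟨j, by omega, hi₀⟩) hneg
        linarith
      · have := (hm (j + 1) hj).1 i hmem
        simp [he] at this
        linarith

lemma foldr_tail {n : ℕ} {A : Finset (Fin n)} {L : List (Finset (Fin n))}
    (hpd : (A :: L).Pairwise Disjoint) :
    L.foldr (· ∪ ·) ∅ = ((A :: L).foldr (· ∪ ·) ∅) \ A := by
  have hdis : Disjoint A (L.foldr (· ∪ ·) ∅) := by
    rw [Finset.disjoint_right]
    intro i hi hiA
    obtain ⟨j, hj, hmem⟩ := mem_foldr.1 hi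
    have := (List.pairwise_cons.1 hpd).1 (L[j]'hj) (List.getElem_mem _)
    exact (Finset.disjoint_left.1 this) hiA hmem
  simp only [List.foldr_cons]
  rw [Finset.union_sdiff_cancel_left hdis]

lemma mem_unique {n : ℕ} : ∀ (L M : List (Finset (Fin n))) (x : Fin n → ℝ),
    (∀ A ∈ L, A.Nonempty) → L.Pairwise Disjoint →
    (∀ A ∈ M, A.Nonempty) → M.Pairwise Disjoint →
    L.foldr (· ∪ ·) ∅ = M.foldr (· ∪ ·) ∅ →
    Mem n x L → Mem n x M → L = M := by
  intro L
  induction L with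
  | nil =>
    intro M x _ _ hMne _ hfold _ _
    cases M with
    | nil => rfl
    | cons B M =>
      exfalso
      obtain ⟨i, hi⟩ := hMne B (List.mem_cons_self)
      have : i ∈ ([] : List (Finset (Fin n))).foldr (· ∪ ·) ∅ := by
        rw [hfold]; exact subset_foldr (List.mem_cons_self) hi
      simpa using this
  | cons A L ih =>
    intro M x hLne hLpd hMne hMpd hfold hmL hmM
    cases M with
    | nil =>
      exfalso
      obtain ⟨i, hi⟩ := hLne A (List.mem_cons_self)
      have : i ∈ ([] : List (Finset (Fin n))).foldr (· ∪ ·) ∅ := by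
        rw [← hfold]; exact subset_foldr (List.mem_cons_self) hi
      simpa using this
    | cons B M =>
      have hAB : A = B := by
        rw [head_eq hLne hmL, head_eq hMne hmM, hfold]
      subst hAB
      have htail : L.foldr (· ∪ ·) ∅ = M.foldr (· ∪ ·) ∅ := by
        rw [foldr_tail hLpd, foldr_tail hMpd, hfold]
      have := ih M (-x) (fun C hC => hLne C (List.mem_cons_of_mem _ hC))
        (List.pairwise_cons.1 hLpd).2 (fun C hC => hMne C (List.mem_cons_of_mem _ hC))
        (List.pairwise_cons.1 hMpd).2 htail (mem_neg_tail hmL) (mem_neg_tail hmM)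
      rw [this]

lemma mem_exists {n : ℕ} (S : Finset (Fin n)) : ∀ (x : Fin n → ℝ),
    (∀ i, x i ≠ 0) → (∀ i j, i ≠ j → |x i| ≠ |x j|) →
    (∀ i ∈ S, x i < 0 → ∃ i' ∈ S, 0 < x i' ∧ |x i| < |x i'|) →
    ∃ L : List (Finset (Fin n)), (∀ A ∈ L, A.Nonempty) ∧ L.Pairwise Disjoint ∧
      L.foldr (· ∪ ·) ∅ = S ∧ Mem n x L := by
  induction S using Finset.strongInduction with
  | _ S ih =>
    intro x hx0 hd hpos
    rcases S.eq_empty_or_nonempty with rfl | hSne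
    · exact ⟨[], by simp, by simp, by simp, fun j hj => by simp at hj⟩
    · obtain ⟨m, hmS, hmax⟩ := S.exists_max_image (fun i => |x i|) hSne
      have hxm : 0 < x m := by
        rcases (hx0 m).lt_or_gt with hneg | hpos'
        · obtain ⟨i', hi'S, hi'pos, hlt⟩ := hpos m hmS hneg
          exact absurd (hmax i' hi'S) (by linarith)
        · exact hpos'
      set A := S.filter (fun i => 0 < x i ∧ ∀ i' ∈ S, x i' < 0 → |x i'| < |x i|) with hA
      have hmA : m ∈ A := by
        refine Finset.mem_filter.2 ⟨hmS, hxm, fun i' hi' hneg => ?_⟩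
        have hne : i' ≠ m := fun h => by rw [h] at hneg; linarith
        exact lt_of_le_of_ne (hmax i' hi') (hd i' m hne)
      have hAS : A ⊆ S := Finset.filter_subset _ _
      have hssub : S \ A ⊂ S := by
        apply Finset.sdiff_ssubset ?_ ⟨m, hmA⟩
        exact hAS
      -- key: every element of A dominates every element of S \ A
      have hdom : ∀ i₁ ∈ A, ∀ i₂ ∈ S \ A, |x i₂| < |x i₁| := by
        intro i₁ h₁ i₂ h₂
        obtain ⟨h₂S, h₂A⟩ := Finset.mem_sdiff.1 h₂
        obtain ⟨h₁S, h₁pos, h₁dom⟩ := Finset.mem_filter.1 h₁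
        rcases (hx0 i₂).lt_or_gt with hneg | hpos'
        · exact h₁dom i₂ h₂S hneg
        · have : ∃ i₀ ∈ S, x i₀ < 0 ∧ ¬ |x i₀| < |x i₂| := by
            by_contra hc
            push_neg at hc
            exact h₂A (Finset.mem_filter.2 ⟨h₂S, hpos', hc⟩)
          obtain ⟨i₀, hi₀S, hi₀neg, hi₀⟩ := this
          have hne : i₂ ≠ i₀ := fun h => by rw [h] at hpos'; linarith
          have h1 : |x i₂| < |x i₀| :=
            lt_of_le_of_ne (not_lt.1 hi₀) (hd i₂ i₀ hne)
          exact h1.trans (h₁dom i₀ hi₀S hi₀neg)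
      -- recursive call on S \ A with -x
      have hpos' : ∀ i ∈ S \ A, (-x) i < 0 → ∃ i' ∈ S \ A, 0 < (-x) i' ∧ |(-x) i| < |(-x) i'| := by
        intro i hi hneg
        simp only [Pi.neg_apply, neg_neg, neg_lt_zero] at hneg ⊢
        obtain ⟨hiS, hiA⟩ := Finset.mem_sdiff.1 hi
        have : ∃ i₀ ∈ S, x i₀ < 0 ∧ ¬ |x i₀| < |x i| := by
          by_contra hc
          push_neg at hc
          exact hiA (Finset.mem_filter.2 ⟨hiS, hneg, hc⟩)
        obtain ⟨i₀, hi₀S, hi₀neg, hi₀⟩ := this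
        have hne : i ≠ i₀ := fun h => by rw [h] at hneg; linarith
        refine ⟨i₀, Finset.mem_sdiff.2 ⟨hi₀S, fun hmem => ?_⟩, by simpa [abs_neg] using hi₀neg, ?_⟩
        · exact absurd (Finset.mem_filter.1 hmem).2.1 (by linarith)
        · simp only [abs_neg]
          exact lt_of_le_of_ne (not_lt.1 hi₀) (hd i i₀ hne)
      have hx0' : ∀ i, (-x) i ≠ 0 := fun i => by simpa using hx0 i
      have hd' : ∀ i j, i ≠ j → |(-x) i| ≠ |(-x) j| := fun i j hij => by
        simpa [abs_neg] using hd i j hij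
      obtain ⟨L', hL'ne, hL'pd, hL'fold, hL'mem⟩ := ih (S \ A) hssub (-x) hx0' hd' hpos'
      refine ⟨A :: L', ?_, ?_, ?_, ?_⟩
      · intro B hB
        rcases List.mem_cons.1 hB with rfl | hB
        · exact ⟨m, hmA⟩
        · exact hL'ne B hB
      · refine List.pairwise_cons.2 ⟨fun B hB => ?_, hL'pd⟩
        have : B ⊆ S \ A := hL'fold ▸ subset_foldr hB
        rw [Finset.disjoint_right]
        intro i hiB hiA
        exact (Finset.mem_sdiff.1 (this hiB)).2 hiA
      · simp only [List.foldr_cons, hL'fold]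
        exact Finset.union_sdiff_of_subset hAS
      · refine mem_cons (fun i hi => (Finset.mem_filter.1 hi).2.1) ?_ (by simpa using hL'mem)
        intro i₁ h₁ hl i₂ h₂
        have : i₂ ∈ S \ A := hL'fold ▸ subset_foldr (List.getElem_mem hl) h₂
        exact hdom i₁ h₁ i₂ this

lemma idx_unique {n : ℕ} {L : List (Finset (Fin n))} (hpd : L.Pairwise Disjoint)
    {i : Fin n} {j k : ℕ} (hj : j < L.length) (hk : k < L.length)
    (hij : i ∈ L[j]'hj) (hik : i ∈ L[k]'hk) : j = k := by
  by_contra hne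
  rcases Nat.lt_or_ge j k with h | h
  · have := List.pairwise_iff_getElem.1 hpd j k hj hk h
    exact Finset.disjoint_left.1 this hij hik
  · have hlt : k < j := by omega
    have := List.pairwise_iff_getElem.1 hpd k j hk hj hlt
    exact Finset.disjoint_left.1 this hik hij

lemma rplus_nonempty {n : ℕ} {L : List (Finset (Fin n))}
    (hpd : L.Pairwise Disjoint) (hfold : L.foldr (· ∪ ·) ∅ = Finset.univ) :
    ∃ x : Fin n → ℝ, Mem n x L := by
  classical
  have H : ∀ i : Fin n, ∃ j, i ∈ L.getD j ∅ := by
    intro i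
    have : i ∈ L.foldr (· ∪ ·) ∅ := hfold ▸ Finset.mem_univ i
    obtain ⟨j, hj, hmem⟩ := mem_foldr.1 this
    exact ⟨j, by rwa [List.getD_eq_getElem _ _ hj]⟩
  set idx : Fin n → ℕ := fun i => Nat.find (H i) with hidx
  have hidx_lt : ∀ i, idx i < L.length := by
    intro i
    by_contra hge
    have hspec : i ∈ L.getD (idx i) ∅ := Nat.find_spec (H i)
    rw [List.getD_eq_default _ _ (not_lt.1 hge)] at hspec
    simpa using hspec
  have hidx_mem : ∀ i, i ∈ L[idx i]'(hidx_lt i) := by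
    intro i
    have hspec : i ∈ L.getD (idx i) ∅ := Nat.find_spec (H i)
    rwa [List.getD_eq_getElem _ _ (hidx_lt i)] at hspec
  have hidx_eq : ∀ (i : Fin n) (j : ℕ) (hj : j < L.length), i ∈ L[j]'hj → idx i = j :=
    fun i j hj hmem => idx_unique hpd (hidx_lt i) hj (hidx_mem i) hmem
  set val : ℕ → ℝ := fun j => (if Even j then (1:ℝ) else -1) * (1/2)^j with hval
  have habs : ∀ j, |val j| = (1/2)^j := by
    intro j
    by_cases he : Even j <;>
      simp [hval, he, abs_of_pos, pow_pos, abs_neg] <;>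
      rw [abs_of_pos (by positivity)]
  refine ⟨fun i => val (idx i), fun j hj => ⟨fun i hi => ?_, fun hj' i₁ h₁ i₂ h₂ => ?_⟩⟩
  · show if Even j then 0 < val (idx i) else val (idx i) < 0
    rw [hidx_eq i j hj hi]
    by_cases he : Even j
    · have hv : val j = (1/2)^j := by simp [hval, he]
      rw [if_pos he, hv]; positivity
    · have hv : val j = -((1/2)^j) := by simp [hval, he]
      have h0 : (0:ℝ) < (1/2)^j := by positivity
      rw [if_neg he, hv]; linarith
  · show |val (idx i₂)| < |val (idx i₁)|
    rw [hidx_eq i₁ j hj h₁, hidx_eq i₂ (j+1) hj' h₂, habs, habs]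
    exact pow_lt_pow_right_of_lt_one₀ (by norm_num) (by norm_num) (by omega)

lemma rplus_open {n : ℕ} (L : List (Finset (Fin n))) : IsOpen (Rplus n L) := by
  have heq : Rplus n L = ⋂ j : Fin L.length,
      ((⋂ i ∈ (L[(j:ℕ)]'j.isLt), {x : Fin n → ℝ | if Even (j:ℕ) then 0 < x i else x i < 0}) ∩
        ⋂ (hj' : (j:ℕ) + 1 < L.length), ⋂ i₁ ∈ L[(j:ℕ)]'j.isLt, ⋂ i₂ ∈ L[(j:ℕ)+1]'hj',
          {x : Fin n → ℝ | |x i₂| < |x i₁|}) := by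
    ext x
    simp only [Rplus, Set.mem_setOf_eq, Set.mem_iInter, Set.mem_inter_iff]
    constructor
    · intro h j
      refine ⟨fun i hi => (h (j:ℕ) j.isLt).1 i hi, fun hj' i₁ h₁ i₂ h₂ =>
        (h (j:ℕ) j.isLt).2 hj' i₁ h₁ i₂ h₂⟩
    · intro h j hj
      exact ⟨fun i hi => (h ⟨j, hj⟩).1 i hi, fun hj' i₁ h₁ i₂ h₂ =>
        (h ⟨j, hj⟩).2 hj' i₁ h₁ i₂ h₂⟩
  rw [heq]
  refine isOpen_iInter_of_finite fun j => IsOpen.inter ?_ ?_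
  · refine isOpen_biInter_finset fun i _ => ?_
    by_cases he : Even (j:ℕ)
    · simp only [if_pos he]
      exact isOpen_lt continuous_const (continuous_apply i)
    · simp only [if_neg he]
      exact isOpen_lt (continuous_apply i) continuous_const
  · exact @isOpen_iInter_of_finite _ _ _ Finite.of_subsingleton _ fun hj' =>
      isOpen_biInter_finset fun i₁ _ => isOpen_biInter_finset fun i₂ _ =>
        isOpen_lt ((continuous_apply i₂).abs) ((continuous_apply i₁).abs)

lemma max_pos {n : ℕ} {x : Fin n → ℝ} {L : List (Finset (Fin n))}
    (hne : ∀ A ∈ L, A.Nonempty) (hm : Mem n x L)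
    (hfold : L.foldr (· ∪ ·) ∅ = Finset.univ)
    {m : Fin n} (hmax : ∀ i, |x i| ≤ |x m|) : 0 < x m := by
  have : m ∈ L.foldr (· ∪ ·) ∅ := hfold ▸ Finset.mem_univ m
  obtain ⟨j, hj, hjm⟩ := mem_foldr.1 this
  match j, hj, hjm with
  | 0, hj, hjm =>
    have := (hm 0 hj).1 m hjm
    simpa using this
  | j + 1, hj, hjm =>
    exfalso
    obtain ⟨i₀, hi₀⟩ := hne (L[0]'(by omega)) (List.getElem_mem _)
    have := mem_lt_of_lt hne hm (Nat.succ_pos j) hj i₀ hi₀ m hjm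
    exact absurd (hmax i₀) (by linarith)

lemma nil_of_empty {n : ℕ} {L : List (Finset (Fin n))}
    (hne : ∀ A ∈ L, A.Nonempty) (hfold : L.foldr (· ∪ ·) ∅ = ∅) : L = [] := by
  cases L with
  | nil => rfl
  | cons A L =>
    exfalso
    obtain ⟨i, hi⟩ := hne A (List.mem_cons_self)
    have : i ∈ (A :: L).foldr (· ∪ ·) ∅ := subset_foldr (List.mem_cons_self) hi
    rw [hfold] at this
    simp at this

/-- For every ordered partition of `[n]` the regions `R⁺` and `R⁻` are
nonempty and open, and every point generic for the arrangement `H_n` (all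
`xᵢ ≠ 0`, all `xᵢ + xⱼ ≠ 0`) and for the ordering of the `|xᵢ|` lies in `R⁺`
or `R⁻` for exactly one ordered partition: a 2-to-1 correspondence from
regions to ordered partitions. -/
theorem two_to_one_correspondence (n : ℕ) :
    (∀ L : List (Finset (Fin n)), IsOP n L →
      (Rplus n L).Nonempty ∧ IsOpen (Rplus n L) ∧
      (Rminus n L).Nonempty ∧ IsOpen (Rminus n L)) ∧
    (∀ x : Fin n → ℝ, (∀ i, x i ≠ 0) → (∀ i j, i ≠ j → x i + x j ≠ 0) →
      (∀ i j, i ≠ j → |x i| ≠ |x j|) →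
      ∃! L : List (Finset (Fin n)),
        IsOP n L ∧ (x ∈ Rplus n L ∨ x ∈ Rminus n L)) := by
  constructor
  · rintro L ⟨hne, hpd, hfold⟩
    obtain ⟨x, hx⟩ := rplus_nonempty hpd hfold
    have hopen := rplus_open L
    have hRm : {y : Fin n → ℝ | -y ∈ Rplus n L} = (fun y : Fin n → ℝ => -y) ⁻¹' Rplus n L := rfl
    refine ⟨⟨x, hx⟩, hopen, ⟨-x, ?_⟩, ?_⟩
    · show -(-x) ∈ Rplus n L
      rw [neg_neg]; exact hx
    · show IsOpen ((fun y : Fin n → ℝ => -y) ⁻¹' Rplus n L)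
      exact hopen.preimage continuous_neg
  · intro x hx0 _ hd
    have hx0' : ∀ i, (-x) i ≠ 0 := fun i => by simpa using hx0 i
    have hd' : ∀ i j, i ≠ j → |(-x) i| ≠ |(-x) j| := fun i j hij => by
      simpa [abs_neg] using hd i j hij
    -- uniqueness key
    have key : ∀ L M : List (Finset (Fin n)),
        ((∀ A ∈ L, A.Nonempty) ∧ L.Pairwise Disjoint ∧ L.foldr (· ∪ ·) ∅ = Finset.univ) →
        ((∀ A ∈ M, A.Nonempty) ∧ M.Pairwise Disjoint ∧ M.foldr (· ∪ ·) ∅ = Finset.univ) →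
        (x ∈ Rplus n L ∨ x ∈ {y | -y ∈ Rplus n L}) →
        (x ∈ Rplus n M ∨ x ∈ {y | -y ∈ Rplus n M}) → L = M := by
      rintro L M ⟨hLne, hLpd, hLfold⟩ ⟨hMne, hMpd, hMfold⟩ hL hM
      have hmix : ∀ (P Q : List (Finset (Fin n))),
          (∀ A ∈ P, A.Nonempty) → P.foldr (· ∪ ·) ∅ = Finset.univ →
          (∀ A ∈ Q, A.Nonempty) → Q.foldr (· ∪ ·) ∅ = Finset.univ →
          Mem n x P → Mem n (-x) Q → P = Q := by
        intro P Q hPne hPfold hQne hQfold hmP hmQ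
        rcases (Finset.univ : Finset (Fin n)).eq_empty_or_nonempty with hemp | ⟨m0, _⟩
        · rw [nil_of_empty hPne (hPfold.trans hemp), nil_of_empty hQne (hQfold.trans hemp)]
        · exfalso
          obtain ⟨m, _, hmax⟩ := (Finset.univ : Finset (Fin n)).exists_max_image
            (fun i => |x i|) ⟨m0, Finset.mem_univ m0⟩
          have h1 : 0 < x m := max_pos hPne hmP hPfold (fun i => hmax i (Finset.mem_univ i))
          have h2 : 0 < (-x) m := max_pos hQne hmQ hQfold (fun i => by
            simpa [abs_neg] using hmax i (Finset.mem_univ i))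
          simp only [Pi.neg_apply] at h2
          linarith
      rcases hL with hL | hL <;> rcases hM with hM | hM
      · exact mem_unique L M x hLne hLpd hMne hMpd (hLfold.trans hMfold.symm) hL hM
      · exact hmix L M hLne hLfold hMne hMfold hL hM
      · exact (hmix M L hMne hMfold hLne hLfold hM hL).symm
      · exact mem_unique L M (-x) hLne hLpd hMne hMpd (hLfold.trans hMfold.symm) hL hM
    -- existence
    have hexist : ∃ L : List (Finset (Fin n)),
        ((∀ A ∈ L, A.Nonempty) ∧ L.Pairwise Disjoint ∧ L.foldr (· ∪ ·) ∅ = Finset.univ) ∧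
          (x ∈ Rplus n L ∨ x ∈ {y | -y ∈ Rplus n L}) := by
      rcases (Finset.univ : Finset (Fin n)).eq_empty_or_nonempty with hemp | ⟨m0, _⟩
      · refine ⟨[], ⟨by simp, by simp, by rw [hemp]; simp⟩, Or.inl ?_⟩
        exact fun j hj => by simp at hj
      · obtain ⟨m, _, hmax⟩ := (Finset.univ : Finset (Fin n)).exists_max_image
          (fun i => |x i|) ⟨m0, Finset.mem_univ m0⟩
        rcases (hx0 m).lt_or_gt with hneg | hposm
        · -- apply existence to -x
          have hpos : ∀ i ∈ (Finset.univ : Finset (Fin n)), (-x) i < 0 →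
              ∃ i' ∈ (Finset.univ : Finset (Fin n)), 0 < (-x) i' ∧ |(-x) i| < |(-x) i'| := by
            intro i _ hi
            refine ⟨m, Finset.mem_univ m, by simpa using hneg, ?_⟩
            simp only [Pi.neg_apply, abs_neg]
            have hne : i ≠ m := fun h => by
              rw [h] at hi; simp only [Pi.neg_apply] at hi; linarith
            exact lt_of_le_of_ne (hmax i (Finset.mem_univ i)) (hd i m hne)
          obtain ⟨L, h1, h2, h3, h4⟩ := mem_exists Finset.univ (-x) hx0' hd' hpos
          exact ⟨L, ⟨h1, h2, h3⟩, Or.inr h4⟩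
        · have hpos : ∀ i ∈ (Finset.univ : Finset (Fin n)), x i < 0 →
              ∃ i' ∈ (Finset.univ : Finset (Fin n)), 0 < x i' ∧ |x i| < |x i'| := by
            intro i _ hi
            refine ⟨m, Finset.mem_univ m, hposm, ?_⟩
            have hne : i ≠ m := fun h => by rw [h] at hi; linarith
            exact lt_of_le_of_ne (hmax i (Finset.mem_univ i)) (hd i m hne)
          obtain ⟨L, h1, h2, h3, h4⟩ := mem_exists Finset.univ x hx0 hd hpos
          exact ⟨L, ⟨h1, h2, h3⟩, Or.inl h4⟩
    obtain ⟨L, hL1, hL2⟩ := hexist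
    exact ⟨L, ⟨hL1, hL2⟩, fun M ⟨hM1, hM2⟩ => key M L hM1 hL1 hM2 hL2⟩
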